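/- For all integers 0 ≤ r ≤ s ≤ k, the identity (Σ_{n≥0} G_n^{(k)}(r→s) x^n) · p̂_{k+1}^{(0)}(x) = x^{s−r} · p̂_r^{(0)}(x) · p̂_{k−s}^{(s+1)}(x) holds in R⟦x⟧; and for all integers 0 ≤ s ≤ r ≤ k, (Σ_{n≥0} G_n^{(k)}(r→s) x^n) · p̂_{k+1}^{(0)}(x) = x^{r−s} · (B_{s+1} B_{s+2} ⋯ B_r) · p̂_s^{(0)}(x) · p̂_{k−r}^{(r+1)}(x). -/

import Mathlib

set_option maxHeartbeats 1000000


variable {R : Type*} [CommRing R]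

/-- The `B`-weight of a bounded up-down path: each down-step from height `h` to
height `h−1` contributes a factor `B h`, up-steps contribute `1`. -/
def pathBWeight (B : ℕ → R) {k n : ℕ} (h : Fin (n + 1) → Fin (k + 1)) : R :=
  ∏ i : Fin n,
    if (h i.succ : ℕ) + 1 = (h i.castSucc : ℕ) then B (h i.castSucc : ℕ) else 1

open scoped Classical in
/-- `GpathB B k n r s` is the sum of the `B`-weights of all up-down paths
`(h_0,…,h_n)` with `h_0 = r`, `h_n = s`, `0 ≤ h_i ≤ k` and `|h_{i+1} − h_i| = 1`. -/
noncomputable def GpathB (B : ℕ → R) (k n r s : ℕ) : R :=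
  ∑ h : {h : Fin (n + 1) → Fin (k + 1) //
      (h 0 : ℕ) = r ∧ (h (Fin.last n) : ℕ) = s ∧
      ∀ i : Fin n, (h i.succ : ℕ) + 1 = (h i.castSucc : ℕ) ∨
        (h i.castSucc : ℕ) + 1 = (h i.succ : ℕ)},
    pathBWeight B h.1

/-- `phat B t m` is the polynomial `p̂_m^{(t)}(x) = x^m P_m(1/x)` with every
coefficient `B_i` replaced by `B_{i+t}`: it satisfies `p̂_0 = p̂_1 = 1` and
`p̂_{m+1} = p̂_m − B_{m+t} x² p̂_{m−1}` for `m ≥ 1`. -/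
noncomputable def phat (B : ℕ → R) (t : ℕ) : ℕ → Polynomial R
  | 0 => 1
  | 1 => 1
  | m + 2 => phat B t (m + 1) - Polynomial.C (B (m + 1 + t)) * Polynomial.X ^ 2 * phat B t m

open scoped Classical in
lemma GpathB_eq_sum (B : ℕ → R) (k n r s : ℕ) :
    GpathB B k n r s = ∑ h : Fin (n + 1) → Fin (k + 1),
      if ((h 0 : ℕ) = r ∧ (h (Fin.last n) : ℕ) = s ∧
          ∀ i : Fin n, (h i.succ : ℕ) + 1 = (h i.castSucc : ℕ) ∨
            (h i.castSucc : ℕ) + 1 = (h i.succ : ℕ)) then pathBWeight B h else 0 := by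
  rw [GpathB, ← Finset.sum_filter]
  exact (Finset.sum_subtype
    (p := fun h : Fin (n + 1) → Fin (k + 1) => (h 0 : ℕ) = r ∧ (h (Fin.last n) : ℕ) = s ∧
      ∀ i : Fin n, (h i.succ : ℕ) + 1 = (h i.castSucc : ℕ) ∨
        (h i.castSucc : ℕ) + 1 = (h i.succ : ℕ))
    (Finset.filter _ Finset.univ) (fun x => by simp) (pathBWeight B)).symm


lemma GpathB_zero (B : ℕ → R) (k r s : ℕ) (hr : r ≤ k) :
    GpathB B k 0 r s = if r = s then 1 else 0 := by
  classical
  rw [GpathB_eq_sum]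
  rcases eq_or_ne r s with h | h
  · subst h
    rw [Fintype.sum_eq_single (fun _ => ⟨r, by omega⟩ : Fin 1 → Fin (k + 1))]
    · simp [pathBWeight]
    · intro h hne
      rw [if_neg]
      rintro ⟨h1, -⟩
      exact hne (funext fun i => by rw [Subsingleton.elim i 0]; exact Fin.ext h1)
  · rw [if_neg h]
    apply Finset.sum_eq_zero
    intro a _
    rw [if_neg]
    rintro ⟨h1, h2, -⟩
    exact h (h1 ▸ h2)

lemma pathBWeight_cons (B : ℕ → R) {k n : ℕ} (a : Fin (k + 1)) (h' : Fin (n + 1) → Fin (k + 1)) :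
    pathBWeight B (Fin.cons a h') =
      (if (h' 0 : ℕ) + 1 = (a : ℕ) then B (a : ℕ) else 1) * pathBWeight B h' := by
  rw [pathBWeight, Fin.prod_univ_succ, pathBWeight]
  congr 1

lemma cond_cons {k n : ℕ} (a : Fin (k + 1)) (h' : Fin (n + 1) → Fin (k + 1)) :
    (∀ i : Fin (n + 1), ((Fin.cons a h' : Fin (n+2) → Fin (k+1)) i.succ : ℕ) + 1 = ((Fin.cons a h' : Fin (n+2) → Fin (k+1)) i.castSucc : ℕ) ∨
        ((Fin.cons a h' : Fin (n+2) → Fin (k+1)) i.castSucc : ℕ) + 1 = ((Fin.cons a h' : Fin (n+2) → Fin (k+1)) i.succ : ℕ))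
    ↔ (((h' 0 : ℕ) + 1 = (a : ℕ) ∨ (a : ℕ) + 1 = (h' 0 : ℕ)) ∧
        ∀ j : Fin n, (h' j.succ : ℕ) + 1 = (h' j.castSucc : ℕ) ∨
          (h' j.castSucc : ℕ) + 1 = (h' j.succ : ℕ)) := by
  constructor
  · intro H
    refine ⟨by simpa using H 0, fun j => by simpa [← Fin.succ_castSucc, Fin.cons_succ] using H j.succ⟩
  · rintro ⟨H0, H⟩ i
    induction i using Fin.cases with
    | zero => simpa using H0
    | succ j => simpa [← Fin.succ_castSucc, Fin.cons_succ] using H j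

open scoped Classical in
lemma GpathB_succ (B : ℕ → R) (k n r s : ℕ) (hr : r ≤ k) :
    GpathB B k (n + 1) r s =
      (if r + 1 ≤ k then GpathB B k n (r + 1) s else 0) +
        (if 0 < r then B r * GpathB B k n (r - 1) s else 0) := by
  rw [GpathB_eq_sum]
  rw [← Equiv.sum_comp (Fin.consEquiv (fun _ : Fin (n + 2) => Fin (k + 1)))]
  rw [Fintype.sum_prod_type]
  have key : ∀ (a : Fin (k + 1)) (h' : Fin (n + 1) → Fin (k + 1)),
      (if (((Fin.cons a h' : Fin (n+2) → Fin (k+1)) 0 : ℕ) = r ∧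
          ((Fin.cons a h' : Fin (n+2) → Fin (k+1)) (Fin.last (n+1)) : ℕ) = s ∧
          ∀ i : Fin (n+1), ((Fin.cons a h' : Fin (n+2) → Fin (k+1)) i.succ : ℕ) + 1 = ((Fin.cons a h' : Fin (n+2) → Fin (k+1)) i.castSucc : ℕ) ∨
            ((Fin.cons a h' : Fin (n+2) → Fin (k+1)) i.castSucc : ℕ) + 1 = ((Fin.cons a h' : Fin (n+2) → Fin (k+1)) i.succ : ℕ))
        then pathBWeight B (Fin.cons a h') else 0)
      = if a = (⟨r, by omega⟩ : Fin (k + 1)) then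
          ((if ((h' 0 : ℕ) + 1 = r ∧ (h' (Fin.last n) : ℕ) = s ∧
              ∀ j : Fin n, (h' j.succ : ℕ) + 1 = (h' j.castSucc : ℕ) ∨
                (h' j.castSucc : ℕ) + 1 = (h' j.succ : ℕ)) then B r * pathBWeight B h' else 0)
           + (if (r + 1 = (h' 0 : ℕ) ∧ (h' (Fin.last n) : ℕ) = s ∧
              ∀ j : Fin n, (h' j.succ : ℕ) + 1 = (h' j.castSucc : ℕ) ∨
                (h' j.castSucc : ℕ) + 1 = (h' j.succ : ℕ)) then pathBWeight B h' else 0))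
        else 0 := by
    intro a h'
    rw [pathBWeight_cons]
    by_cases ha : a = (⟨r, by omega⟩ : Fin (k + 1))
    · subst ha
      rw [if_pos rfl]
      have h0 : ((Fin.cons (⟨r, by omega⟩ : Fin (k+1)) h' : Fin (n+2) → Fin (k+1)) 0 : ℕ) = r := by simp
      have hlast : ((Fin.cons (⟨r, by omega⟩ : Fin (k+1)) h' : Fin (n+2) → Fin (k+1)) (Fin.last (n+1)) : ℕ) = (h' (Fin.last n) : ℕ) := by
        rw [← Fin.succ_last, Fin.cons_succ]
      have hBIG : ((((Fin.cons (⟨r, by omega⟩ : Fin (k+1)) h' : Fin (n+2) → Fin (k+1)) 0 : ℕ) = r ∧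
          ((Fin.cons (⟨r, by omega⟩ : Fin (k+1)) h' : Fin (n+2) → Fin (k+1)) (Fin.last (n+1)) : ℕ) = s ∧
          ∀ i : Fin (n+1), ((Fin.cons (⟨r, by omega⟩ : Fin (k+1)) h' : Fin (n+2) → Fin (k+1)) i.succ : ℕ) + 1 = ((Fin.cons (⟨r, by omega⟩ : Fin (k+1)) h' : Fin (n+2) → Fin (k+1)) i.castSucc : ℕ) ∨
            ((Fin.cons (⟨r, by omega⟩ : Fin (k+1)) h' : Fin (n+2) → Fin (k+1)) i.castSucc : ℕ) + 1 = ((Fin.cons (⟨r, by omega⟩ : Fin (k+1)) h' : Fin (n+2) → Fin (k+1)) i.succ : ℕ))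
          ↔ (((h' 0 : ℕ) + 1 = r ∨ r + 1 = (h' 0 : ℕ)) ∧ ((h' (Fin.last n) : ℕ) = s ∧
          ∀ j : Fin n, (h' j.succ : ℕ) + 1 = (h' j.castSucc : ℕ) ∨
            (h' j.castSucc : ℕ) + 1 = (h' j.succ : ℕ)))) := by
        rw [cond_cons]
        constructor
        · rintro ⟨-, c2, c3, c4⟩
          exact ⟨by simpa using c3, by rw [← hlast]; exact c2, c4⟩
        · rintro ⟨c1, c2, c3⟩
          exact ⟨h0, by rw [hlast]; exact c2, by simpa using c1, c3⟩
      rw [if_congr hBIG rfl rfl]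
      have hstep : ((if (h' 0 : ℕ) + 1 = ((⟨r, by omega⟩ : Fin (k+1)) : ℕ) then B ((⟨r, by omega⟩ : Fin (k+1)) : ℕ) else 1) : R)
          = if (h' 0 : ℕ) + 1 = r then B r else 1 := rfl
      rw [hstep]
      by_cases hP1 : (h' 0 : ℕ) + 1 = r <;>
        by_cases hP2 : r + 1 = (h' 0 : ℕ) <;>
          by_cases hQ : ((h' (Fin.last n) : ℕ) = s ∧
            ∀ j : Fin n, (h' j.succ : ℕ) + 1 = (h' j.castSucc : ℕ) ∨
              (h' j.castSucc : ℕ) + 1 = (h' j.succ : ℕ)) <;>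
        simp [hP1, hP2, hQ] <;> omega
    · rw [if_neg ha, if_neg]
      rintro ⟨c1, -, -⟩
      exact ha (Fin.ext (by simpa using c1))
  refine ((Finset.sum_congr rfl fun a _ => Finset.sum_congr rfl fun h' _ => key a h').trans ?_)
  have swap : ∀ a : Fin (k + 1), (∑ h' : Fin (n + 1) → Fin (k + 1),
      if a = (⟨r, by omega⟩ : Fin (k + 1)) then
          ((if ((h' 0 : ℕ) + 1 = r ∧ (h' (Fin.last n) : ℕ) = s ∧
              ∀ j : Fin n, (h' j.succ : ℕ) + 1 = (h' j.castSucc : ℕ) ∨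
                (h' j.castSucc : ℕ) + 1 = (h' j.succ : ℕ)) then B r * pathBWeight B h' else 0)
           + (if (r + 1 = (h' 0 : ℕ) ∧ (h' (Fin.last n) : ℕ) = s ∧
              ∀ j : Fin n, (h' j.succ : ℕ) + 1 = (h' j.castSucc : ℕ) ∨
                (h' j.castSucc : ℕ) + 1 = (h' j.succ : ℕ)) then pathBWeight B h' else 0))
        else 0)
      = if a = (⟨r, by omega⟩ : Fin (k + 1)) then (∑ h' : Fin (n + 1) → Fin (k + 1),
          ((if ((h' 0 : ℕ) + 1 = r ∧ (h' (Fin.last n) : ℕ) = s ∧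
              ∀ j : Fin n, (h' j.succ : ℕ) + 1 = (h' j.castSucc : ℕ) ∨
                (h' j.castSucc : ℕ) + 1 = (h' j.succ : ℕ)) then B r * pathBWeight B h' else 0)
           + (if (r + 1 = (h' 0 : ℕ) ∧ (h' (Fin.last n) : ℕ) = s ∧
              ∀ j : Fin n, (h' j.succ : ℕ) + 1 = (h' j.castSucc : ℕ) ∨
                (h' j.castSucc : ℕ) + 1 = (h' j.succ : ℕ)) then pathBWeight B h' else 0)))
        else 0 := by
    intro a
    by_cases hc : a = (⟨r, by omega⟩ : Fin (k + 1)) <;> simp [hc]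
  rw [Finset.sum_congr rfl fun a _ => swap a]
  rw [Finset.sum_ite_eq' Finset.univ (⟨r, by omega⟩ : Fin (k + 1))]
  rw [if_pos (Finset.mem_univ _)]
  rw [Finset.sum_add_distrib]
  rw [add_comm]
  congr 1
  · by_cases hk : r + 1 ≤ k
    · rw [if_pos hk, GpathB_eq_sum]
      refine Finset.sum_congr rfl fun h' _ => if_congr ?_ rfl rfl
      constructor
      · rintro ⟨c1, c2⟩; exact ⟨c1.symm, c2⟩
      · rintro ⟨c1, c2⟩; exact ⟨c1.symm, c2⟩
    · rw [if_neg hk]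
      refine Finset.sum_eq_zero fun h' _ => if_neg ?_
      rintro ⟨c1, -⟩
      have := (h' 0).is_le
      omega
  · by_cases hp : 0 < r
    · rw [if_pos hp, GpathB_eq_sum, Finset.mul_sum]
      refine Finset.sum_congr rfl fun h' _ => ?_
      rw [mul_ite, mul_zero]
      refine if_congr ?_ rfl rfl
      constructor
      · rintro ⟨c1, c2⟩; exact ⟨by omega, c2⟩
      · rintro ⟨c1, c2⟩; exact ⟨by omega, c2⟩
    · rw [if_neg hp]
      refine Finset.sum_eq_zero fun h' _ => if_neg ?_
      rintro ⟨c1, -⟩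
      omega

open Polynomial

lemma phat_rec (B : ℕ → R) (t m : ℕ) :
    phat B t (m + 2) = phat B t (m + 1) - C (B (m + 1 + t)) * X ^ 2 * phat B t m := rfl
lemma phat_zero (B : ℕ → R) (t : ℕ) : phat B t 0 = 1 := rfl
lemma phat_one (B : ℕ → R) (t : ℕ) : phat B t 1 = 1 := rfl

lemma frontRec (B : ℕ → R) : ∀ (m t : ℕ),
    phat B t (m + 2) = phat B (t + 1) (m + 1) - C (B (t + 1)) * X ^ 2 * phat B (t + 2) m
  | 0, t => by simp [phat, Nat.add_comm]
  | 1, t => by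
      simp only [phat]
      rw [show 1 + 1 + t = 1 + (t + 1) by omega, show 0 + 1 + t = t + 1 by omega]
      ring
  | (m + 2), t => by
      have h1 := frontRec B (m + 1) t
      have h2 := frontRec B m t
      rw [phat_rec B t (m + 2), show m + 2 + 1 = m + 1 + 2 by omega, h1, h2,
        phat_rec B (t + 1) (m + 1), phat_rec B (t + 2) m,
        show m + 1 + 2 + t = m + t + 3 by omega, show m + 1 + 1 + (t + 1) = m + t + 3 by omega,
        show m + 1 + (t + 2) = m + t + 3 by omega]
      ring

lemma crossing (B : ℕ → R) : ∀ (b a t : ℕ),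
    phat B t (a + b + 2) = phat B t (a + 1) * phat B (a + 1 + t) (b + 1)
      - C (B (a + 1 + t)) * X ^ 2 * phat B t a * phat B (a + 2 + t) b
  | 0, a, t => by
      rw [show a + 0 + 2 = a + 2 by omega, phat_rec B t a]
      simp only [phat]
      ring
  | 1, a, t => by
      simp only [phat]
      rw [show a + 1 + 1 + t = 0 + 1 + (a + 1 + t) by omega]
      ring
  | (b + 2), a, t => by
      have h1 := crossing B (b + 1) a t
      have h2 := crossing B b a t
      rw [show a + (b + 2) + 2 = (a + b + 2) + 2 by omega, phat_rec B t (a + b + 2),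
        show a + b + 2 + 1 = a + (b + 1) + 2 by omega, h1, h2,
        show b + 2 + 1 = b + 1 + 2 by omega, phat_rec B (a + 1 + t) (b + 1),
        phat_rec B (a + 2 + t) b,
        show b + 1 + 1 + (a + 1 + t) = a + b + t + 3 by omega,
        show b + 1 + (a + 2 + t) = a + b + t + 3 by omega]
      ring

noncomputable def Hpoly (B : ℕ → R) (k r s : ℕ) : Polynomial R :=
  X ^ (s - r) * X ^ (r - s) * C (∏ i ∈ Finset.Icc (s + 1) r, B i) *
    phat B 0 (min r s) * phat B (max r s + 1) (k - max r s)

lemma Hpoly_le (B : ℕ → R) (k : ℕ) {r s : ℕ} (h : r ≤ s) :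
    Hpoly B k r s = X ^ (s - r) * phat B 0 r * phat B (s + 1) (k - s) := by
  rw [Hpoly, min_eq_left h, max_eq_right h, Finset.Icc_eq_empty (by omega),
    show r - s = 0 by omega]
  simp

lemma Hpoly_ge (B : ℕ → R) (k : ℕ) {r s : ℕ} (h : s ≤ r) :
    Hpoly B k r s = X ^ (r - s) * C (∏ i ∈ Finset.Icc (s + 1) r, B i) *
      phat B 0 s * phat B (r + 1) (k - r) := by
  rw [Hpoly, min_eq_right h, max_eq_left h, show s - r = 0 by omega]
  simp [mul_comm, mul_assoc, mul_left_comm]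

lemma keyRel (B : ℕ → R) (k r s : ℕ) (hr : r ≤ k) (hs : s ≤ k) :
    Hpoly B k r s = (if r = s then phat B 0 (k + 1) else 0)
      + (if r + 1 ≤ k then X * Hpoly B k (r + 1) s else 0)
      + (if 0 < r then C (B r) * X * Hpoly B k (r - 1) s else 0) := by
  rcases Nat.lt_trichotomy r s with hlt | heq | hgt
  · -- r < s
    obtain ⟨d, rfl⟩ : ∃ d, s = r + (d + 1) := ⟨s - r - 1, by omega⟩
    rw [if_neg (by omega), if_pos (by omega)]
    rw [Hpoly_le B k (show r ≤ r + (d + 1) by omega),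
      Hpoly_le B k (show r + 1 ≤ r + (d + 1) by omega),
      show r + (d + 1) - r = d + 1 by omega, show r + (d + 1) - (r + 1) = d by omega]
    rcases Nat.eq_zero_or_pos r with rfl | hrpos
    · rw [if_neg (by omega)]
      rw [phat_zero, phat_one]
      ring
    · obtain ⟨m, rfl⟩ : ∃ m, r = m + 1 := ⟨r - 1, by omega⟩
      rw [if_pos (by omega), show m + 1 - 1 = m by omega,
        Hpoly_le B k (show m ≤ m + 1 + (d + 1) by omega),
        show m + 1 + (d + 1) - m = d + 2 by omega,
        show m + 1 + 1 = m + 2 by omega, phat_rec B 0 m, show m + 1 + 0 = m + 1 by omega]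
      ring
  · -- r = s
    subst heq
    rw [if_pos rfl]
    by_cases hk : r + 1 ≤ k
    · -- r < k
      obtain ⟨j, rfl⟩ : ∃ j, k = r + 1 + j := ⟨k - r - 1, by omega⟩
      rw [if_pos hk, Hpoly_le B (r + 1 + j) (le_refl r), show r - r = 0 by omega,
        show r + 1 + j - r = j + 1 by omega,
        Hpoly_ge B (r + 1 + j) (show r ≤ r + 1 by omega),
        show r + 1 - r = 1 by omega, Finset.Icc_self, Finset.prod_singleton,
        show r + 1 + 1 = r + 2 by omega, show r + 1 + j - (r + 1) = j by omega]
      rcases Nat.eq_zero_or_pos r with rfl | hrpos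
      · rw [if_neg (by omega)]
        rw [show 0 + 1 + j + 1 = j + 2 by omega, frontRec B j 0, phat_zero]
        ring
      · obtain ⟨m, rfl⟩ : ∃ m, r = m + 1 := ⟨r - 1, by omega⟩
        rw [if_pos (by omega), show m + 1 - 1 = m by omega,
          Hpoly_le B (m + 1 + 1 + j) (show m ≤ m + 1 by omega),
          show m + 1 - m = 1 by omega, show m + 1 + 1 + j - (m + 1) = j + 1 by omega,
          show m + 1 + 1 + j + 1 = m + 1 + j + 2 by omega, crossing B j (m + 1) 0,
          show m + 1 + 1 + 0 = m + 2 + 0 by omega, show m + 2 + 0 = m + 2 by omega,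
          show m + 1 + 0 = m + 1 by omega, phat_rec B 0 m, pow_one]
        ring
    · -- r = k
      rw [if_neg hk]
      have hrk : r = k := by omega
      subst hrk
      rcases Nat.eq_zero_or_pos r with rfl | hrpos
      · rw [if_neg (by omega)]
        rw [Hpoly_le B 0 (le_refl 0)]
        simp [phat_zero, phat_one]
      · obtain ⟨m, rfl⟩ : ∃ m, r = m + 1 := ⟨r - 1, by omega⟩
        rw [if_pos (by omega), show m + 1 - 1 = m by omega,
          Hpoly_le B (m + 1) (le_refl (m + 1)), show m + 1 - (m + 1) = 0 by omega,
          Hpoly_le B (m + 1) (show m ≤ m + 1 by omega), show m + 1 - m = 1 by omega,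
          show m + 1 + 1 = m + 2 by omega, phat_rec B 0 m, show m + 1 + 0 = m + 1 by omega,
          show m + 1 - (m + 1) = 0 by omega, phat_zero, pow_one, pow_zero]
        ring
  · -- r > s
    obtain ⟨e, rfl⟩ : ∃ e, r = s + (e + 1) := ⟨r - s - 1, by omega⟩
    rw [if_neg (by omega)]
    rw [Hpoly_ge B k (show s ≤ s + (e + 1) by omega), show s + (e + 1) - s = e + 1 by omega]
    by_cases hk : s + (e + 1) + 1 ≤ k
    · obtain ⟨j, rfl⟩ : ∃ j, k = s + (e + 1) + 1 + j := ⟨k - s - e - 2, by omega⟩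
      rw [if_pos hk, if_pos (by omega),
        Hpoly_ge B _ (show s ≤ s + (e + 1) + 1 by omega),
        show s + (e + 1) + 1 - s = e + 2 by omega,
        show s + (e + 1) - 1 = s + e by omega,
        Hpoly_ge B _ (show s ≤ s + e by omega),
        show s + e - s = e by omega,
        show s + (e + 1) + 1 + j - (s + (e + 1)) = j + 1 by omega,
        show s + (e + 1) + 1 + j - (s + (e + 1) + 1) = j by omega,
        show s + (e + 1) + 1 + j - (s + e) = j + 2 by omega,
        show s + (e + 1) + 1 = s + e + 2 by omega,
        show s + (e + 1) = s + e + 1 by omega,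
        show s + e + 2 + 1 = s + e + 3 by omega,
        frontRec B j (s + e + 1),
        show s + e + 1 + 1 = s + e + 2 by omega,
        show s + e + 1 + 2 = s + e + 3 by omega,
        show (s + e + 2 : ℕ) = s + e + 1 + 1 by omega,
        Finset.prod_Icc_succ_top (show s + 1 ≤ s + e + 1 + 1 by omega),
        Finset.prod_Icc_succ_top (show s + 1 ≤ s + e + 1 by omega)]
      simp only [map_mul]
      ring
    · have hrk : s + (e + 1) = k := by omega
      rw [if_neg hk, if_pos (by omega), show s + (e + 1) - 1 = s + e by omega,
        Hpoly_ge B k (show s ≤ s + e by omega), show s + e - s = e by omega,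
        ← hrk,
        show s + (e + 1) - (s + (e + 1)) = 0 by omega,
        show s + (e + 1) - (s + e) = 1 by omega,
        show s + (e + 1) = s + e + 1 by omega,
        phat_zero, phat_one,
        Finset.prod_Icc_succ_top (show s + 1 ≤ s + e + 1 by omega),
        map_mul]
      ring

lemma mainPS (B : ℕ → R) (k r s : ℕ) (hr : r ≤ k) (hs : s ≤ k) :
    (PowerSeries.mk fun n => GpathB B k n r s) * (phat B 0 (k + 1) : PowerSeries R)
      = (Hpoly B k r s : PowerSeries R) := by
  set P : PowerSeries R := (phat B 0 (k + 1) : PowerSeries R) with hP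
  -- D r = F r * P - H r
  set D : ℕ → PowerSeries R := fun r =>
    (PowerSeries.mk fun n => GpathB B k n r s) * P - (Hpoly B k r s : PowerSeries R) with hD
  -- recurrence for F
  have hF : ∀ r : ℕ, r ≤ k → (PowerSeries.mk fun n => GpathB B k n r s) =
      PowerSeries.C (if r = s then 1 else 0) +
        PowerSeries.X * ((if r + 1 ≤ k then PowerSeries.mk fun n => GpathB B k n (r + 1) s else 0) +
          (if 0 < r then PowerSeries.C (B r) * PowerSeries.mk fun n => GpathB B k n (r - 1) s else 0)) := by
    intro r hrk
    ext n
    cases n with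
    | zero =>
        simp only [PowerSeries.coeff_mk, map_add, PowerSeries.coeff_zero_X_mul, add_zero,
          PowerSeries.coeff_zero_C]
        rw [GpathB_zero B k r s hrk]
    | succ n =>
        simp only [PowerSeries.coeff_mk]
        rw [GpathB_succ B k n r s hrk]
        simp only [map_add, PowerSeries.coeff_mk, PowerSeries.coeff_succ_X_mul,
          PowerSeries.coeff_C, Nat.succ_ne_zero, if_false, zero_add]
        congr 1
        · by_cases h : r + 1 ≤ k <;> simp [h]
        · by_cases h : 0 < r <;> simp [h, PowerSeries.coeff_C_mul]
  -- recurrence for H (coerced)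
  have hH : ∀ r : ℕ, r ≤ k → (Hpoly B k r s : PowerSeries R) =
      (if r = s then P else 0) +
        PowerSeries.X * ((if r + 1 ≤ k then (Hpoly B k (r + 1) s : PowerSeries R) else 0) +
          (if 0 < r then PowerSeries.C (B r) * (Hpoly B k (r - 1) s : PowerSeries R) else 0)) := by
    intro r hrk
    rw [keyRel B k r s hrk hs]
    simp only [Polynomial.coe_add, Polynomial.coe_mul, Polynomial.coe_X, Polynomial.coe_C,
      apply_ite (fun q : Polynomial R => (q : PowerSeries R)), Polynomial.coe_zero]
    by_cases h3 : r = s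
    · subst h3
      by_cases h1 : r + 1 ≤ k <;> by_cases h2 : 0 < r <;>
        simp only [h1, h2, eq_self_iff_true, if_true, if_false, ite_true, ite_false] <;> ring
    · by_cases h1 : r + 1 ≤ k <;> by_cases h2 : 0 < r <;>
        simp only [h1, h2, h3, if_true, if_false, ite_true, ite_false] <;> ring
  -- recurrence for D
  have hDrec : ∀ r : ℕ, r ≤ k → D r =
      PowerSeries.X * ((if r + 1 ≤ k then D (r + 1) else 0) +
        (if 0 < r then PowerSeries.C (B r) * D (r - 1) else 0)) := by
    intro r hrk
    rw [hD]
    simp only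
    have hCd : PowerSeries.C (if r = s then (1 : R) else 0) * P = (if r = s then P else 0) := by
      by_cases h : r = s <;> simp [h]
    rw [hF r hrk, hH r hrk, add_mul, hCd]
    by_cases h1 : r + 1 ≤ k <;> by_cases h2 : 0 < r <;>
      simp only [h1, h2, if_true, if_false, ite_true, ite_false] <;> ring
  have hcoeff : ∀ n : ℕ, ∀ r : ℕ, r ≤ k → (PowerSeries.coeff n) (D r) = 0 := by
    intro n
    induction n with
    | zero =>
        intro r hrk
        rw [hDrec r hrk]
        exact PowerSeries.coeff_zero_X_mul _
    | succ n ih =>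
        intro r hrk
        rw [hDrec r hrk, PowerSeries.coeff_succ_X_mul, map_add]
        have t1 : (PowerSeries.coeff n) (if r + 1 ≤ k then D (r + 1) else 0) = 0 := by
          by_cases h : r + 1 ≤ k
          · rw [if_pos h]; exact ih (r + 1) h
          · rw [if_neg h, map_zero]
        have t2 : (PowerSeries.coeff n)
            (if 0 < r then PowerSeries.C (B r) * D (r - 1) else 0) = 0 := by
          by_cases h : 0 < r
          · rw [if_pos h, PowerSeries.coeff_C_mul, ih (r - 1) (by omega), mul_zero]
          · rw [if_neg h, map_zero]
        rw [t1, t2, add_zero]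
  have : D r = 0 := by
    ext n
    rw [hcoeff n r hr, map_zero]
  have := sub_eq_zero.mp this
  simpa [hD] using this

/-- Theorem 27: the weighted generating function identity
`(Σ_{n≥0} G_n^{(k)}(r→s) x^n) · p̂_{k+1}^{(0)}(x) = x^{s−r} p̂_r^{(0)}(x) p̂_{k−s}^{(s+1)}(x)`
for `r ≤ s ≤ k`, and the symmetric identity (with factor `B_{s+1}⋯B_r`) for `s ≤ r ≤ k`. -/
theorem statement12 (B : ℕ → R) (k r s : ℕ) (hr : r ≤ k) (hs : s ≤ k) :
    (r ≤ s →
      (PowerSeries.mk fun n => GpathB B k n r s) * (phat B 0 (k + 1) : PowerSeries R)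
        = PowerSeries.X ^ (s - r) * (phat B 0 r : PowerSeries R) *
            (phat B (s + 1) (k - s) : PowerSeries R)) ∧
    (s ≤ r →
      (PowerSeries.mk fun n => GpathB B k n r s) * (phat B 0 (k + 1) : PowerSeries R)
        = PowerSeries.X ^ (r - s) * PowerSeries.C (∏ i ∈ Finset.Icc (s + 1) r, B i) *
            (phat B 0 s : PowerSeries R) * (phat B (r + 1) (k - r) : PowerSeries R)) := by
  constructor
  · intro hle
    rw [mainPS B k r s hr hs, Hpoly_le B k hle, Polynomial.coe_mul, Polynomial.coe_mul,
      Polynomial.coe_pow, Polynomial.coe_X]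
  · intro hge
    rw [mainPS B k r s hr hs, Hpoly_ge B k hge, Polynomial.coe_mul, Polynomial.coe_mul,
      Polynomial.coe_mul, Polynomial.coe_pow, Polynomial.coe_X, Polynomial.coe_C]
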